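/- Let G be a group scheme acting on a scheme X over a base, with an exact sequence of group schemes 1 → H → G → G′ → 1 admitting a scheme-theoretic section σ : G′ → G of the projection (not necessarily a homomorphism, with σ(1) = 1). Suppose X′ is a scheme with G′-action and f : X → X′ is a morphism compatible with the actions via G → G′. Assume: (a) S_H ⊆ X is a nice section for the H-action on X; (b) S′ ⊆ X′ is a nice section for the G′-action on X′; (c) for any scheme T and points x ∈ X(T), g ∈ G(T) with f(gx) = f(x), there exists h ∈ H(T) with gx = hx. Then S := S_H ∩ f^{-1}(S′) is a nice section for the G-action on X. -/
import Mathlib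


/-- A subset `S ⊆ X` is a *nice section* for the action of a group `G` on `X` if there
are maps `ρ : X → G` and `π : X → S` such that `π` is `G`-invariant, `ρ` restricted to
`S` is constantly `1`, and `ρ(x) • π(x) = x` for all `x`.  (Following the paper's
definition; as permitted by the context, we work in the category of sets with group
actions.) -/
def IsNiceSection (G : Type*) [Group G] {X : Type*} [MulAction G X] (S : Set X) : Prop :=
  ∃ (ρ : X → G) (π : X → X),
    (∀ x : X, π x ∈ S) ∧ (∀ (g : G) (x : X), π (g • x) = π x) ∧
    (∀ x ∈ S, ρ x = 1) ∧ (∀ x : X, ρ x • π x = x)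

/-- Let `G` act on `X`, with an exact sequence
`1 → H → G →p→ G′ → 1` (so `H = ker p`, `p` surjective) admitting a set-theoretic section
`σ` of `p` with `σ(1) = 1`.  Let `X′` carry a `G′`-action and `f : X → X′` be equivariant
via `p`.  Assume: (a) `S_H` is a nice section for the `H`-action on `X`; (b) `S′` is a
nice section for the `G′`-action on `X′`; (c) whenever `f(g • x) = f(x)` there is
`h ∈ H` with `g • x = h • x`.  Then `S := S_H ∩ f⁻¹(S′)` is a nice section for the
`G`-action on `X`. -/
theorem stmt11 {G G' X X' : Type*} [Group G] [Group G']
    [MulAction G X] [MulAction G' X']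
    (p : G →* G') (hp : Function.Surjective p)
    (σ : G' → G) (hσ : ∀ g' : G', p (σ g') = g') (hσ1 : σ 1 = 1)
    (f : X → X') (hf : ∀ (g : G) (x : X), f (g • x) = p g • f x)
    (S_H : Set X) (hSH : IsNiceSection (↥p.ker) S_H)
    (S' : Set X') (hS' : IsNiceSection G' S')
    (hcond : ∀ (x : X) (g : G), f (g • x) = f x → ∃ h ∈ p.ker, g • x = h • x) :
    IsNiceSection G (S_H ∩ f ⁻¹' S') := by
  obtain ⟨ρH, πH, hπH, hπHinv, hρH1, hρHact⟩ := hSH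
  obtain ⟨ρ', π', hπ', hπ'inv, hρ'1, hρ'act⟩ := hS'
  have hsub : ∀ (h : ↥p.ker) (x : X), h • x = (h : G) • x := fun h x => rfl
  have key : ∀ x : X, f ((σ (ρ' (f x)))⁻¹ • x) = π' (f x) := by
    intro x
    rw [hf, map_inv, hσ, inv_smul_eq_iff]
    exact (hρ'act (f x)).symm
  have keyf : ∀ y : X, f (πH y) = f y := by
    intro y
    conv_rhs => rw [← hρHact y]
    rw [hsub, hf, show p (ρH y : G) = 1 from (ρH y).2, one_smul]
  refine ⟨fun x => σ (ρ' (f x)) * (ρH ((σ (ρ' (f x)))⁻¹ • x) : G),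
          fun x => πH ((σ (ρ' (f x)))⁻¹ • x), ?_, ?_, ?_, ?_⟩
  · intro x
    refine ⟨hπH _, ?_⟩
    show f (πH _) ∈ S'
    rw [keyf, key]
    exact hπ' (f x)
  · intro g x
    set y := (σ (ρ' (f x)))⁻¹ • x with hy
    set k := (σ (ρ' (f (g • x))))⁻¹ * g * σ (ρ' (f x)) with hk
    have hky : k • y = (σ (ρ' (f (g • x))))⁻¹ • (g • x) := by
      simp only [hk, hy, mul_smul, smul_inv_smul]
    have hfk : f (k • y) = f y := by
      rw [hky, key, key, hf, hπ'inv]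
    obtain ⟨h, hh, heq⟩ := hcond y k hfk
    show πH ((σ (ρ' (f (g • x))))⁻¹ • (g • x)) = πH y
    rw [← hky, heq, show (h • y : X) = (⟨h, hh⟩ : ↥p.ker) • y from rfl, hπHinv]
  · rintro x ⟨hx1, hx2⟩
    have h1 : ρ' (f x) = 1 := hρ'1 _ hx2
    simp only [h1, hσ1, inv_one, one_smul, hρH1 x hx1, OneMemClass.coe_one, mul_one]
  · intro x
    rw [mul_smul, ← hsub, hρHact, smul_inv_smul]
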